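/- For i ∈ ℤ define w*_i : ℝ → ℝ by w*_i(ξ) = (1/2)·B(4ξ − 4i) + B(4ξ − 4i − 1) + B(4ξ − 4i − 2) + B(4ξ − 4i − 3) + (1/2)·B(4ξ − 4i − 4), where B is the cubic cardinal B-spline. Then: (a) Σ_{i∈ℤ} w*_i(ξ) = 1 for every ξ ∈ ℝ; (b) w*_i(ξ) = 0 whenever ξ ∉ [i, i+2]; (c) for every ξ ∈ ℝ at most two of the values w*_i(ξ), i ∈ ℤ, are nonzero; (d) each w*_i is twice continuously differentiable on ℝ; and (e) each w*_i agrees with a polynomial of degree ≤ 3 on each interval [k/4, (k+1)/4] for every k ∈ ℤ. (Polynomial one-ring blending functions obtained from five consecutive cubic B-splines with mask (1/2, 1, 1, 1, 1/2).) -/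

import Mathlib

open Polynomial Filter Asymptotics

/-- The cubic cardinal B-spline with knots `0, 1, 2, 3, 4`. -/
noncomputable def cubicB (t : ℝ) : ℝ :=
  if t ≤ 0 then 0
  else if t ≤ 1 then t ^ 3 / 6
  else if t ≤ 2 then (-3 * t ^ 3 + 12 * t ^ 2 - 12 * t + 4) / 6
  else if t ≤ 3 then (3 * t ^ 3 - 24 * t ^ 2 + 60 * t - 44) / 6
  else if t ≤ 4 then (4 - t) ^ 3 / 6
  else 0

lemma B_le0 {t : ℝ} (h : t ≤ 0) : cubicB t = 0 := by
  unfold cubicB; rw [if_pos h]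

lemma B_01 {t : ℝ} (h0 : 0 ≤ t) (h1 : t ≤ 1) : cubicB t = t ^ 3 / 6 := by
  unfold cubicB
  rcases lt_or_ge 0 t with h | h
  · rw [if_neg (by linarith), if_pos h1]
  · have ht : t = 0 := le_antisymm h h0
    subst ht; norm_num

lemma B_12 {t : ℝ} (h1 : 1 ≤ t) (h2 : t ≤ 2) :
    cubicB t = (-3 * t ^ 3 + 12 * t ^ 2 - 12 * t + 4) / 6 := by
  rcases lt_or_ge 1 t with h | h
  · unfold cubicB; rw [if_neg (by linarith), if_neg (by linarith), if_pos h2]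
  · have ht : t = 1 := le_antisymm h h1
    subst ht; norm_num [cubicB]

lemma B_23 {t : ℝ} (h1 : 2 ≤ t) (h2 : t ≤ 3) :
    cubicB t = (3 * t ^ 3 - 24 * t ^ 2 + 60 * t - 44) / 6 := by
  rcases lt_or_ge 2 t with h | h
  · unfold cubicB
    rw [if_neg (by linarith), if_neg (by linarith), if_neg (by linarith), if_pos h2]
  · have ht : t = 2 := le_antisymm h h1
    subst ht; norm_num [cubicB]

lemma B_34 {t : ℝ} (h1 : 3 ≤ t) (h2 : t ≤ 4) : cubicB t = (4 - t) ^ 3 / 6 := by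
  rcases lt_or_ge 3 t with h | h
  · unfold cubicB
    rw [if_neg (by linarith), if_neg (by linarith), if_neg (by linarith),
      if_neg (by linarith), if_pos h2]
  · have ht : t = 3 := le_antisymm h h1
    subst ht; norm_num [cubicB]

lemma B_ge4 {t : ℝ} (h : 4 ≤ t) : cubicB t = 0 := by
  rcases lt_or_ge 4 t with h' | h'
  · unfold cubicB
    rw [if_neg (by linarith), if_neg (by linarith), if_neg (by linarith),
      if_neg (by linarith), if_neg (by linarith)]
  · have ht : t = 4 := le_antisymm h' h
    subst ht; norm_num [cubicB]

lemma Bsum {u : ℝ} (h0 : 0 ≤ u) (h4 : u < 4) :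
    cubicB (u + 3) + cubicB (u + 2) + cubicB (u + 1) + cubicB u +
      cubicB (u - 1) + cubicB (u - 2) + cubicB (u - 3) = 1 := by
  rcases lt_or_ge u 1 with h | h
  · rw [B_34 (by linarith) (by linarith), B_23 (by linarith) (by linarith),
      B_12 (by linarith) (by linarith), B_01 h0 (by linarith),
      B_le0 (by linarith), B_le0 (by linarith), B_le0 (by linarith)]
    ring
  rcases lt_or_ge u 2 with h' | h'
  · rw [B_ge4 (by linarith), B_34 (by linarith) (by linarith),
      B_23 (by linarith) (by linarith), B_12 (by linarith) (by linarith),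
      B_01 (by linarith) (by linarith), B_le0 (by linarith), B_le0 (by linarith)]
    ring
  rcases lt_or_ge u 3 with h'' | h''
  · rw [B_ge4 (by linarith), B_ge4 (by linarith), B_34 (by linarith) (by linarith),
      B_23 (by linarith) (by linarith), B_12 (by linarith) (by linarith),
      B_01 (by linarith) (by linarith), B_le0 (by linarith)]
    ring
  · rw [B_ge4 (by linarith), B_ge4 (by linarith), B_ge4 (by linarith),
      B_34 (by linarith) (by linarith), B_23 (by linarith) (by linarith),
      B_12 (by linarith) (by linarith), B_01 (by linarith) (by linarith)]
    ring

lemma hasDerivAt_max_cube (x : ℝ) :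
    HasDerivAt (fun y : ℝ => max y 0 ^ 3) (3 * max x 0 ^ 2) x := by
  rcases lt_trichotomy x 0 with h | h | h
  · have hc : HasDerivAt (fun _ : ℝ => (0 : ℝ)) 0 x := hasDerivAt_const x 0
    have he : (fun y : ℝ => max y 0 ^ 3) =ᶠ[nhds x] fun _ => (0 : ℝ) := by
      filter_upwards [Iio_mem_nhds h] with y hy
      simp [max_eq_right (le_of_lt (show y < 0 from hy))]
    have := hc.congr_of_eventuallyEq he
    simpa [max_eq_right h.le] using this
  · subst h
    rw [hasDerivAt_iff_isLittleO, Asymptotics.isLittleO_iff]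
    intro c hc
    have hmem : Set.Ioo (-(min c 1)) (min c 1) ∈ nhds (0 : ℝ) :=
      Ioo_mem_nhds (by simp [hc]) (by simp [hc])
    filter_upwards [hmem] with y hy
    obtain ⟨hy1, hy2⟩ := hy
    have hb : |y| < min c 1 := abs_lt.mpr ⟨hy1, hy2⟩
    have h1 : |y| < 1 := lt_of_lt_of_le hb (min_le_right _ _)
    have h2 : |y| < c := lt_of_lt_of_le hb (min_le_left _ _)
    have hym : max y 0 ≤ |y| := by
      rcases le_or_gt y 0 with hy0 | hy0
      · simp [max_eq_right hy0, abs_nonneg]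
      · rw [max_eq_left hy0.le, abs_of_pos hy0]
    have hym0 : 0 ≤ max y 0 := le_max_right _ _
    have key : max y 0 ^ 3 ≤ c * |y| := by
      have h3 : max y 0 ^ 3 ≤ |y| ^ 3 := pow_le_pow_left₀ hym0 hym 3
      nlinarith [h3, mul_nonneg (abs_nonneg y) (le_of_lt (sub_pos.mpr h2)),
        mul_nonneg (mul_nonneg (abs_nonneg y) (abs_nonneg y)) (le_of_lt (sub_pos.mpr h1))]
    have hnorm : ‖max y 0 ^ 3 - max (0:ℝ) 0 ^ 3 - (y - 0) • (3 * max (0:ℝ) 0 ^ 2)‖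
        = max y 0 ^ 3 := by
      simp [Real.norm_eq_abs, abs_of_nonneg (pow_nonneg hym0 3)]
    show ‖max y 0 ^ 3 - max (0:ℝ) 0 ^ 3 - (y - 0) • (3 * max (0:ℝ) 0 ^ 2)‖ ≤ c * ‖y - 0‖
    rw [hnorm]
    simpa [Real.norm_eq_abs] using key
  · have hc : HasDerivAt (fun y : ℝ => y ^ 3) (3 * x ^ 2) x := by
      have h0 := hasDerivAt_pow 3 x
      convert h0 using 1 <;> rfl
    have he : (fun y : ℝ => max y 0 ^ 3) =ᶠ[nhds x] fun y => y ^ 3 := by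
      filter_upwards [Ioi_mem_nhds h] with y hy
      simp [max_eq_left (le_of_lt (show 0 < y from hy))]
    have := hc.congr_of_eventuallyEq he
    simpa [max_eq_left h.le] using this

lemma hasDerivAt_max_sq (x : ℝ) :
    HasDerivAt (fun y : ℝ => 3 * max y 0 ^ 2) (6 * max x 0) x := by
  rcases lt_trichotomy x 0 with h | h | h
  · have hc : HasDerivAt (fun _ : ℝ => (0 : ℝ)) 0 x := hasDerivAt_const x 0
    have he : (fun y : ℝ => 3 * max y 0 ^ 2) =ᶠ[nhds x] fun _ => (0 : ℝ) := by
      filter_upwards [Iio_mem_nhds h] with y hy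
      simp [max_eq_right (le_of_lt (show y < 0 from hy))]
    have := hc.congr_of_eventuallyEq he
    simpa [max_eq_right h.le] using this
  · subst h
    rw [hasDerivAt_iff_isLittleO, Asymptotics.isLittleO_iff]
    intro c hc
    have hmem : Set.Ioo (-(c / 3)) (c / 3) ∈ nhds (0 : ℝ) :=
      Ioo_mem_nhds (by linarith) (by linarith)
    filter_upwards [hmem] with y hy
    obtain ⟨hy1, hy2⟩ := hy
    have hb : |y| < c / 3 := abs_lt.mpr ⟨hy1, hy2⟩
    have hym : max y 0 ≤ |y| := by
      rcases le_or_gt y 0 with hy0 | hy0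
      · simp [max_eq_right hy0, abs_nonneg]
      · rw [max_eq_left hy0.le, abs_of_pos hy0]
    have hym0 : 0 ≤ max y 0 := le_max_right _ _
    have key : 3 * max y 0 ^ 2 ≤ c * |y| := by
      have h3 : max y 0 ^ 2 ≤ |y| ^ 2 := pow_le_pow_left₀ hym0 hym 2
      nlinarith [h3, abs_nonneg y]
    have hnorm : ‖3 * max y 0 ^ 2 - 3 * max (0:ℝ) 0 ^ 2 - (y - 0) • (6 * max (0:ℝ) 0)‖
        = 3 * max y 0 ^ 2 := by
      simp [Real.norm_eq_abs]
    show ‖3 * max y 0 ^ 2 - 3 * max (0:ℝ) 0 ^ 2 - (y - 0) • (6 * max (0:ℝ) 0)‖ ≤ c * ‖y - 0‖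
    rw [hnorm]
    simpa [Real.norm_eq_abs] using key
  · have hc : HasDerivAt (fun y : ℝ => 3 * y ^ 2) (6 * x) x := by
      have h0 := (hasDerivAt_pow 2 x).const_mul (3 : ℝ)
      convert h0 using 1
      · rfl
      · rfl
      · push_cast; ring
    have he : (fun y : ℝ => 3 * max y 0 ^ 2) =ᶠ[nhds x] fun y => 3 * y ^ 2 := by
      filter_upwards [Ioi_mem_nhds h] with y hy
      simp [max_eq_left (le_of_lt (show 0 < y from hy))]
    have := hc.congr_of_eventuallyEq he
    simpa [max_eq_left h.le] using this

lemma contDiff_max_cube : ContDiff ℝ 2 (fun x : ℝ => max x 0 ^ 3) := by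
  have hd1 : deriv (fun y : ℝ => max y 0 ^ 3) = fun x => 3 * max x 0 ^ 2 :=
    funext fun x => (hasDerivAt_max_cube x).deriv
  have hd2 : deriv (fun y : ℝ => 3 * max y 0 ^ 2) = fun x => 6 * max x 0 :=
    funext fun x => (hasDerivAt_max_sq x).deriv
  have h2 : (2 : WithTop ℕ∞) = 1 + 1 := by norm_num
  rw [h2, contDiff_succ_iff_deriv]
  refine ⟨fun x => (hasDerivAt_max_cube x).differentiableAt, by simp, ?_⟩
  rw [hd1, contDiff_one_iff_deriv]
  refine ⟨fun x => (hasDerivAt_max_sq x).differentiableAt, ?_⟩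
  rw [hd2]
  exact continuous_const.mul (continuous_id.max continuous_const)

lemma cubicB_eq : cubicB = fun t : ℝ =>
    (max t 0 ^ 3 - 4 * max (t - 1) 0 ^ 3 + 6 * max (t - 2) 0 ^ 3
      - 4 * max (t - 3) 0 ^ 3 + max (t - 4) 0 ^ 3) / 6 := by
  funext t
  rcases le_or_gt t 0 with h | h
  · rw [B_le0 h, max_eq_right h, max_eq_right (by linarith), max_eq_right (by linarith),
      max_eq_right (by linarith), max_eq_right (by linarith)]
    norm_num
  rcases le_or_gt t 1 with h1 | h1
  · rw [B_01 h.le h1, max_eq_left h.le, max_eq_right (by linarith),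
      max_eq_right (by linarith), max_eq_right (by linarith), max_eq_right (by linarith)]
    ring
  rcases le_or_gt t 2 with h2 | h2
  · rw [B_12 h1.le h2, max_eq_left (by linarith), max_eq_left (by linarith),
      max_eq_right (by linarith), max_eq_right (by linarith), max_eq_right (by linarith)]
    ring
  rcases le_or_gt t 3 with h3 | h3
  · rw [B_23 h2.le h3, max_eq_left (by linarith), max_eq_left (by linarith),
      max_eq_left (by linarith), max_eq_right (by linarith), max_eq_right (by linarith)]
    ring
  rcases le_or_gt t 4 with h4 | h4
  · rw [B_34 h3.le h4, max_eq_left (by linarith), max_eq_left (by linarith),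
      max_eq_left (by linarith), max_eq_left (by linarith), max_eq_right (by linarith)]
    ring
  · rw [B_ge4 h4.le, max_eq_left (by linarith), max_eq_left (by linarith),
      max_eq_left (by linarith), max_eq_left (by linarith), max_eq_left (by linarith)]
    ring

lemma contDiff_cubicB : ContDiff ℝ 2 cubicB := by
  rw [cubicB_eq]
  have h : ∀ c : ℝ, ContDiff ℝ 2 (fun t : ℝ => max (t - c) 0 ^ 3) := fun c =>
    contDiff_max_cube.comp (contDiff_id.sub contDiff_const)
  exact ((((contDiff_max_cube.sub (contDiff_const.mul (h 1))).add
    (contDiff_const.mul (h 2))).sub (contDiff_const.mul (h 3))).add (h 4)).div_const 6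

noncomputable def Wb (i : ℤ) (ξ : ℝ) : ℝ :=
  (1 / 2) * cubicB (4 * ξ - 4 * (i : ℝ)) + cubicB (4 * ξ - 4 * (i : ℝ) - 1) +
    cubicB (4 * ξ - 4 * (i : ℝ) - 2) + cubicB (4 * ξ - 4 * (i : ℝ) - 3) +
    (1 / 2) * cubicB (4 * ξ - 4 * (i : ℝ) - 4)

lemma Wb_zero {i : ℤ} {ξ : ℝ} (h : ξ ≤ (i : ℝ) ∨ (i : ℝ) + 2 ≤ ξ) : Wb i ξ = 0 := by
  unfold Wb
  rcases h with h | h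
  · rw [B_le0 (by linarith : 4 * ξ - 4 * (i : ℝ) ≤ 0),
      B_le0 (by linarith : 4 * ξ - 4 * (i : ℝ) - 1 ≤ 0),
      B_le0 (by linarith : 4 * ξ - 4 * (i : ℝ) - 2 ≤ 0),
      B_le0 (by linarith : 4 * ξ - 4 * (i : ℝ) - 3 ≤ 0),
      B_le0 (by linarith : 4 * ξ - 4 * (i : ℝ) - 4 ≤ 0)]
    ring
  · rw [B_ge4 (by linarith : (4:ℝ) ≤ 4 * ξ - 4 * (i : ℝ)),
      B_ge4 (by linarith : (4:ℝ) ≤ 4 * ξ - 4 * (i : ℝ) - 1),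
      B_ge4 (by linarith : (4:ℝ) ≤ 4 * ξ - 4 * (i : ℝ) - 2),
      B_ge4 (by linarith : (4:ℝ) ≤ 4 * ξ - 4 * (i : ℝ) - 3),
      B_ge4 (by linarith : (4:ℝ) ≤ 4 * ξ - 4 * (i : ℝ) - 4)]
    ring

lemma Wb_support {i : ℤ} {ξ : ℝ} (h : Wb i ξ ≠ 0) : (i : ℝ) < ξ ∧ ξ < (i : ℝ) + 2 := by
  constructor
  · by_contra hc
    exact h (Wb_zero (Or.inl (not_lt.mp hc)))
  · by_contra hc
    exact h (Wb_zero (Or.inr (not_lt.mp hc)))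

lemma Wb_floor {i : ℤ} {ξ : ℝ} (h : Wb i ξ ≠ 0) : i = ⌊ξ⌋ - 1 ∨ i = ⌊ξ⌋ := by
  obtain ⟨hl, hr⟩ := Wb_support h
  have h1 : i ≤ ⌊ξ⌋ := Int.le_floor.mpr hl.le
  have h2 : ⌊ξ⌋ < i + 2 := Int.floor_lt.mpr (by push_cast; linarith)
  omega

lemma Wb_pair (ξ : ℝ) : Wb (⌊ξ⌋ - 1) ξ + Wb ⌊ξ⌋ ξ = 1 := by
  have h0 : (⌊ξ⌋ : ℝ) ≤ ξ := Int.floor_le ξ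
  have h1 : ξ < ⌊ξ⌋ + 1 := Int.lt_floor_add_one ξ
  have key := Bsum (u := 4 * ξ - 4 * (⌊ξ⌋ : ℝ)) (by linarith) (by linarith)
  have e4 : cubicB (4 * ξ - 4 * (⌊ξ⌋ : ℝ) - 4) = 0 := B_le0 (by linarith)
  have e5 : cubicB (4 * ξ - 4 * (⌊ξ⌋ : ℝ) + 4) = 0 := B_ge4 (by linarith)
  unfold Wb
  push_cast
  ring_nf
  ring_nf at key e4 e5
  linarith [key, e4, e5]

lemma contDiff_Wb (i : ℤ) : ContDiff ℝ 2 (Wb i) := by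
  unfold Wb
  have hc : ∀ c : ℝ, ContDiff ℝ 2 (fun ξ : ℝ => cubicB (4 * ξ - c)) := fun c =>
    contDiff_cubicB.comp ((contDiff_const.mul contDiff_id).sub contDiff_const)
  have hc2 : ∀ c c' : ℝ, ContDiff ℝ 2 (fun ξ : ℝ => cubicB (4 * ξ - c - c')) := fun c c' =>
    contDiff_cubicB.comp (((contDiff_const.mul contDiff_id).sub contDiff_const).sub
      contDiff_const)
  exact ((((contDiff_const.mul (hc (4 * (i:ℝ)))).add (hc2 (4 * (i:ℝ)) 1)).add
    (hc2 (4 * (i:ℝ)) 2)).add (hc2 (4 * (i:ℝ)) 3)).add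
    (contDiff_const.mul (hc2 (4 * (i:ℝ)) 4))

noncomputable def sPiece (m : ℤ) : Polynomial ℝ :=
  if m < 0 then 0
  else if m = 0 then C (1/6 : ℝ) * X ^ 3
  else if m = 1 then C (-1/2 : ℝ) * X ^ 3 + C 2 * X ^ 2 - C 2 * X + C (2/3)
  else if m = 2 then C (1/2 : ℝ) * X ^ 3 - C 4 * X ^ 2 + C 10 * X - C (22/3)
  else if m = 3 then C (-1/6 : ℝ) * X ^ 3 + C 2 * X ^ 2 - C 8 * X + C (32/3)
  else 0

lemma sPiece_natDegree (m : ℤ) : (sPiece m).natDegree ≤ 3 := by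
  unfold sPiece
  split_ifs <;> compute_degree <;> norm_num

lemma sPiece_eval {m : ℤ} {t : ℝ} (h1 : (m : ℝ) ≤ t) (h2 : t ≤ (m : ℝ) + 1) :
    cubicB t = (sPiece m).eval t := by
  unfold sPiece
  by_cases hm : m < 0
  · rw [if_pos hm]
    have hm' : m ≤ -1 := by omega
    have : (m : ℝ) ≤ -1 := by exact_mod_cast hm'
    simp [B_le0 (by linarith : t ≤ 0)]
  rw [if_neg hm]
  by_cases hm0 : m = 0
  · subst hm0
    rw [if_pos rfl, B_01 (by exact_mod_cast h1) (by simpa using h2)]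
    simp; ring
  rw [if_neg hm0]
  by_cases hm1 : m = 1
  · subst hm1
    rw [if_pos rfl, B_12 (by exact_mod_cast h1) (by push_cast at h2; linarith)]
    simp; ring
  rw [if_neg hm1]
  by_cases hm2 : m = 2
  · subst hm2
    rw [if_pos rfl, B_23 (by exact_mod_cast h1) (by push_cast at h2; linarith)]
    simp; ring
  rw [if_neg hm2]
  by_cases hm3 : m = 3
  · subst hm3
    rw [if_pos rfl, B_34 (by exact_mod_cast h1) (by push_cast at h2; linarith)]
    simp; ring
  rw [if_neg hm3]
  have hm4 : (4 : ℤ) ≤ m := by omega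
  have : (4 : ℝ) ≤ (m : ℝ) := by exact_mod_cast hm4
  simp [B_ge4 (by linarith : (4:ℝ) ≤ t)]

lemma affine_natDegree (c : ℝ) : (C (4:ℝ) * X - C c).natDegree ≤ 1 := by
  compute_degree

lemma comp_natDegree (m : ℤ) (c : ℝ) :
    ((sPiece m).comp (C (4:ℝ) * X - C c)).natDegree ≤ 3 := by
  refine le_trans natDegree_comp_le ?_
  calc (sPiece m).natDegree * (C (4:ℝ) * X - C c).natDegree
      ≤ 3 * 1 := Nat.mul_le_mul (sPiece_natDegree m) (affine_natDegree c)
    _ = 3 := rfl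

/-- Polynomial one-ring blending functions obtained from five consecutive cubic B-splines
on a grid scaled by `4`, mask `(1/2, 1, 1, 1, 1/2)`:
`w*_i(ξ) = ½B(4ξ-4i) + B(4ξ-4i-1) + B(4ξ-4i-2) + B(4ξ-4i-3) + ½B(4ξ-4i-4)`.
Then (a) they form a partition of unity; (b) `w*_i` vanishes outside `[i, i+2]`;
(c) at most two are nonzero at any point; (d) each `w*_i` is `C²` on `ℝ`; (e) each `w*_i`
agrees with a polynomial of degree `≤ 3` on each interval `[k/4, (k+1)/4]`, `k ∈ ℤ`. -/
theorem mask_half_blend_properties (w : ℤ → ℝ → ℝ)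
    (hw : ∀ i : ℤ, ∀ ξ : ℝ, w i ξ =
      (1 / 2) * cubicB (4 * ξ - 4 * (i : ℝ)) + cubicB (4 * ξ - 4 * (i : ℝ) - 1) +
        cubicB (4 * ξ - 4 * (i : ℝ) - 2) + cubicB (4 * ξ - 4 * (i : ℝ) - 3) +
        (1 / 2) * cubicB (4 * ξ - 4 * (i : ℝ) - 4)) :
    (∀ ξ : ℝ, (∑ᶠ i : ℤ, w i ξ) = 1) ∧
    (∀ i : ℤ, ∀ ξ : ℝ, ξ ∉ Set.Icc (i : ℝ) ((i : ℝ) + 2) → w i ξ = 0) ∧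
    (∀ ξ : ℝ, ∃ a b : ℤ, ∀ i : ℤ, w i ξ ≠ 0 → i = a ∨ i = b) ∧
    (∀ i : ℤ, ContDiff ℝ 2 (w i)) ∧
    (∀ i k : ℤ, ∃ p : Polynomial ℝ, p.natDegree ≤ 3 ∧
      ∀ ξ ∈ Set.Icc ((k : ℝ) / 4) (((k : ℝ) + 1) / 4), w i ξ = p.eval ξ) := by
  have hweq : ∀ i : ℤ, w i = Wb i := fun i => funext fun ξ => (hw i ξ).trans rfl
  refine ⟨?_, ?_, ?_, ?_, ?_⟩
  · -- (a) partition of unity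
    intro ξ
    have hsub : Function.support (fun i : ℤ => w i ξ) ⊆ ↑({⌊ξ⌋ - 1, ⌊ξ⌋} : Finset ℤ) := by
      intro i hi
      simp only [Function.mem_support, hweq] at hi
      have := Wb_floor hi
      simp only [Finset.coe_insert, Finset.coe_singleton, Set.mem_insert_iff,
        Set.mem_singleton_iff]
      tauto
    rw [finsum_eq_sum_of_support_subset _ hsub,
      Finset.sum_insert (by simp), Finset.sum_singleton, hweq, hweq]
    exact Wb_pair ξ
  · -- (b) support
    intro i ξ hξ
    rw [hweq]
    simp only [Set.mem_Icc, not_and_or, not_le] at hξ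
    rcases hξ with h | h
    · exact Wb_zero (Or.inl h.le)
    · exact Wb_zero (Or.inr h.le)
  · -- (c) at most two nonzero
    intro ξ
    exact ⟨⌊ξ⌋ - 1, ⌊ξ⌋, fun i hi => Wb_floor (by rwa [hweq] at hi)⟩
  · -- (d) C²
    intro i
    rw [hweq]
    exact contDiff_Wb i
  · -- (e) piecewise polynomial
    intro i k
    refine ⟨C (1/2 : ℝ) * (sPiece (k - 4*i)).comp (C 4 * X - C (4*(i:ℝ)))
      + (sPiece (k - 4*i - 1)).comp (C 4 * X - C (4*(i:ℝ) + 1))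
      + (sPiece (k - 4*i - 2)).comp (C 4 * X - C (4*(i:ℝ) + 2))
      + (sPiece (k - 4*i - 3)).comp (C 4 * X - C (4*(i:ℝ) + 3))
      + C (1/2 : ℝ) * (sPiece (k - 4*i - 4)).comp (C 4 * X - C (4*(i:ℝ) + 4)), ?_, ?_⟩
    · refine le_trans (natDegree_add_le _ _) (max_le ?_ ?_)
      · refine le_trans (natDegree_add_le _ _) (max_le ?_ ?_)
        · refine le_trans (natDegree_add_le _ _) (max_le ?_ ?_)
          · refine le_trans (natDegree_add_le _ _) (max_le ?_ ?_)
            · exact le_trans (natDegree_C_mul_le _ _) (comp_natDegree _ _)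
            · exact comp_natDegree _ _
          · exact comp_natDegree _ _
        · exact comp_natDegree _ _
      · exact le_trans (natDegree_C_mul_le _ _) (comp_natDegree _ _)
    · intro ξ hξ
      obtain ⟨hl, hr⟩ := hξ
      have hk1 : (k : ℝ) ≤ 4 * ξ := by linarith
      have hk2 : 4 * ξ ≤ (k : ℝ) + 1 := by linarith
      rw [hw i ξ,
        sPiece_eval (m := k - 4*i) (by push_cast; linarith) (by push_cast; linarith),
        sPiece_eval (m := k - 4*i - 1) (by push_cast; linarith) (by push_cast; linarith),
        sPiece_eval (m := k - 4*i - 2) (by push_cast; linarith) (by push_cast; linarith),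
        sPiece_eval (m := k - 4*i - 3) (by push_cast; linarith) (by push_cast; linarith),
        sPiece_eval (m := k - 4*i - 4) (by push_cast; linarith) (by push_cast; linarith)]
      simp only [eval_add, eval_mul, eval_comp, eval_sub, eval_C, eval_X]
      rw [show 4 * ξ - (4 * (i:ℝ) + 1) = 4 * ξ - 4 * (i:ℝ) - 1 by ring,
        show 4 * ξ - (4 * (i:ℝ) + 2) = 4 * ξ - 4 * (i:ℝ) - 2 by ring,
        show 4 * ξ - (4 * (i:ℝ) + 3) = 4 * ξ - 4 * (i:ℝ) - 3 by ring,
        show 4 * ξ - (4 * (i:ℝ) + 4) = 4 * ξ - 4 * (i:ℝ) - 4 by ring]
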